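/- For all real numbers A, B with A ≥ 1, B ≥ 1 and A + B ≤ 6 + 4√3, one has A² − AB + 2B + 2 ≥ 0. Consequently, for F(x) = cosh x − 1 and G(y) = cosh y − 1, M(x,y) ≤ 0 for all (x,y) ∈ ℝ² with cosh x + cosh y − 2 ≤ 4 + 4√3 (i.e., with H(x,y) ≤ 4 + 4√3). -/
import Mathlib


/-- The function `M(x,y)` built from `F` and `G`. -/
noncomputable def Mfun (F G : ℝ → ℝ) (x y : ℝ) : ℝ :=
  (6 * F x * (deriv (deriv F) x) ^ 2 - 3 * (deriv F x) ^ 2 * deriv (deriv F) x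
      - 2 * F x * deriv F x * deriv (deriv (deriv F)) x) * G y * (deriv G y) ^ 2
    + F x * (deriv F x) ^ 2 * deriv (deriv F) x
      * ((deriv G y) ^ 2 - 2 * G y * deriv (deriv G) y)

lemma key_ineq (A B : ℝ) (hA : 1 ≤ A) (hB : 1 ≤ B)
    (hAB : A + B ≤ 6 + 4 * Real.sqrt 3) :
    0 ≤ A ^ 2 - A * B + 2 * B + 2 := by
  have hs : Real.sqrt 3 ^ 2 = 3 := Real.sq_sqrt (by norm_num)
  have hs1 : (1:ℝ) ≤ Real.sqrt 3 := by
    nlinarith [Real.sqrt_nonneg 3]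
  rcases le_or_gt A 2 with h | h
  · nlinarith
  · nlinarith [sq_nonneg (A - 2 - Real.sqrt 3), mul_nonneg (sub_nonneg.2 hB) (sub_nonneg.2 hB)]

lemma deriv_coshm1 : deriv (fun x => Real.cosh x - 1) = Real.sinh := by
  ext x
  simp [Real.deriv_cosh]

theorem stmt18 :
    (∀ A B : ℝ, 1 ≤ A → 1 ≤ B → A + B ≤ 6 + 4 * Real.sqrt 3 →
      0 ≤ A ^ 2 - A * B + 2 * B + 2) ∧
    (∀ x y : ℝ, Real.cosh x + Real.cosh y - 2 ≤ 4 + 4 * Real.sqrt 3 →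
      Mfun (fun x => Real.cosh x - 1) (fun y => Real.cosh y - 1) x y ≤ 0) := by
  constructor
  · exact fun A B hA hB hAB => key_ineq A B hA hB hAB
  · intro x y hxy
    have hd2 : deriv (deriv (fun x => Real.cosh x - 1)) = Real.cosh := by
      rw [deriv_coshm1, Real.deriv_sinh]
    have hd3 : deriv (deriv (deriv (fun x => Real.cosh x - 1))) = Real.sinh := by
      rw [hd2, Real.deriv_cosh]
    have hQ : 0 ≤ Real.cosh x ^ 2 - Real.cosh x * Real.cosh y + 2 * Real.cosh y + 2 :=
      key_ineq _ _ (Real.one_le_cosh x) (Real.one_le_cosh y) (by linarith)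
    have hM : Mfun (fun x => Real.cosh x - 1) (fun y => Real.cosh y - 1) x y =
        -((Real.cosh x - 1) ^ 2 * (Real.cosh y - 1) ^ 2 *
          (Real.cosh x ^ 2 - Real.cosh x * Real.cosh y + 2 * Real.cosh y + 2)) := by
      simp only [Mfun, deriv_coshm1, hd2, hd3, Real.deriv_sinh, Real.deriv_cosh]
      linear_combination
        ((6 * (Real.cosh x - 1) * (Real.cosh x) ^ 2 - 3 * (Real.sinh x) ^ 2 * Real.cosh x
            - 2 * (Real.cosh x - 1) * (Real.sinh x) ^ 2) * (Real.cosh y - 1)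
          + (Real.cosh x - 1) * (Real.sinh x) ^ 2 * Real.cosh x) * Real.sinh_sq y
        + ((-3 * Real.cosh x - 2 * (Real.cosh x - 1)) * (Real.cosh y - 1) * (Real.cosh y ^ 2 - 1)
            + (Real.cosh x - 1) * Real.cosh x * (Real.cosh y ^ 2 - 1)
            - 2 * (Real.cosh x - 1) * Real.cosh x * (Real.cosh y - 1) * Real.cosh y)
          * Real.sinh_sq x
    rw [hM]
    have h1 : (0:ℝ) ≤ (Real.cosh x - 1) ^ 2 * (Real.cosh y - 1) ^ 2 :=
      mul_nonneg (sq_nonneg _) (sq_nonneg _)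
    nlinarith [mul_nonneg h1 hQ]
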